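/- arXiv:2602.08092 — 6 statements merged into one kernel-verified Lean document; each statement's English description precedes it below -/
import Mathlib

section
/- Suppose the observed regret satisfies R_T^obs ≤ C·√(T·log T) for some constant C ≥ 0 and T ≥ 1. Then the latent regret satisfies R_T^lat ≥ T·Δ − (C·Δ/δ_min)·√(T·log T). (Rate of Objective Decoupling: any algorithm achieving sublinear regret on the observed signal suffers linear regret on the latent signal.) -/
/-- **Rate of Objective Decoupling.**
If the observed regret satisfies `R_T^obs ≤ C·√(T·log T)` (`C ≥ 0`, `T ≥ 1`), then the
latent regret satisfies `R_T^lat ≥ T·Δ − (C·Δ/δ_min)·√(T·log T)`. -/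
theorem rate_of_objective_decoupling
    {A : Type*} [Fintype A] [DecidableEq A] [Nonempty A]
    (hcard : 1 < Fintype.card A)
    (T : ℕ) (hT : 1 ≤ T)
    (N : A → ℕ) (hN : ∑ a, N a = T)
    (Rbar : A → ℝ) (a_soc : A) (hsoc : ∀ a, Rbar a ≤ Rbar a_soc)
    (δmin : ℝ) (hδdef : δmin = ⨅ a : {a : A // a ≠ a_soc}, (Rbar a_soc - Rbar a.1))
    (hδpos : 0 < δmin)
    (Rstar : A → ℝ) (a_star : A) (hstar : ∀ a, Rstar a ≤ Rstar a_star)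
    (hne : a_star ≠ a_soc)
    (Δ : ℝ) (hΔdef : Δ = Rstar a_star - Rstar a_soc) (hΔpos : 0 < Δ)
    (C : ℝ) (hC : 0 ≤ C)
    (Robs : ℝ) (hRobs : Robs = ∑ a, (N a : ℝ) * (Rbar a_soc - Rbar a))
    (Rlat : ℝ) (hRlat : Rlat = ∑ a, (N a : ℝ) * (Rstar a_star - Rstar a))
    (hObsBound : Robs ≤ C * Real.sqrt (T * Real.log T)) :
    Rlat ≥ T * Δ - (C * Δ / δmin) * Real.sqrt (T * Real.log T) := by
  have hnempty : Nonempty {a : A // a ≠ a_soc} := ⟨⟨a_star, hne⟩⟩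
  have hδle : ∀ a : A, a ≠ a_soc → δmin ≤ Rbar a_soc - Rbar a := by
    intro a ha
    rw [hδdef]
    exact ciInf_le (Set.Finite.bddBelow (Set.finite_range _)) (⟨a, ha⟩ : {a : A // a ≠ a_soc})
  set M : ℝ := ∑ a ∈ Finset.univ.erase a_soc, (N a : ℝ) with hM
  have hMT : (N a_soc : ℝ) + M = T := by
    have h := Finset.add_sum_erase Finset.univ (fun a => (N a : ℝ)) (Finset.mem_univ a_soc)
    rw [hM, h, ← hN]
    push_cast
    ring
  have hMbound : δmin * M ≤ Robs := by
    rw [hRobs, ← Finset.add_sum_erase _ _ (Finset.mem_univ a_soc), hM,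
      Finset.mul_sum]
    have h0 : (N a_soc : ℝ) * (Rbar a_soc - Rbar a_soc) = 0 := by ring
    rw [h0, zero_add]
    apply Finset.sum_le_sum
    intro a ha
    have hane : a ≠ a_soc := Finset.ne_of_mem_erase ha
    have := hδle a hane
    nlinarith [Nat.cast_nonneg (α := ℝ) (N a)]
  have hsqrt : 0 ≤ Real.sqrt (T * Real.log T) := Real.sqrt_nonneg _
  have hM2 : M ≤ C * Real.sqrt (T * Real.log T) / δmin := by
    rw [le_div_iff₀ hδpos]
    nlinarith
  have hRlatLB : (N a_soc : ℝ) * Δ ≤ Rlat := by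
    rw [hRlat, hΔdef]
    apply Finset.single_le_sum (f := fun a => (N a : ℝ) * (Rstar a_star - Rstar a))
      (fun a _ => mul_nonneg (Nat.cast_nonneg _) (by linarith [hstar a]))
      (Finset.mem_univ a_soc)
  have hNsoc : (T : ℝ) - M = N a_soc := by linarith
  have hMΔ : M * Δ ≤ (C * Δ / δmin) * Real.sqrt (T * Real.log T) := by
    have : M * Δ ≤ (C * Real.sqrt (T * Real.log T) / δmin) * Δ :=
      mul_le_mul_of_nonneg_right hM2 hΔpos.le
    calc M * Δ ≤ (C * Real.sqrt (T * Real.log T) / δmin) * Δ := this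
      _ = (C * Δ / δmin) * Real.sqrt (T * Real.log T) := by ring
  nlinarith
end

section
/- If the observed regret is sublinear in the horizon, i.e. R_T^obs / T → 0 as T → ∞, then liminf_{T→∞} R_T^lat / T ≥ Δ; in particular the latent regret is Ω(T), so Objective Decoupling occurs with a strictly positive asymptotic per-step cost. -/
open Filter

/-- If the observed regret is sublinear in the horizon (`R_T^obs / T → 0`), then
`liminf_{T→∞} R_T^lat / T ≥ Δ`: the latent regret is `Ω(T)`, i.e. Objective Decoupling
occurs with a strictly positive asymptotic per-step cost. -/
theorem objective_decoupling_asymptotic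
    {A : Type*} [Fintype A] [DecidableEq A] [Nonempty A]
    (hcard : 1 < Fintype.card A)
    (N : ℕ → A → ℕ) (hN : ∀ T, ∑ a, N T a = T)
    (Rbar : A → ℝ) (a_soc : A) (hsoc : ∀ a, Rbar a ≤ Rbar a_soc)
    (δmin : ℝ) (hδdef : δmin = ⨅ a : {a : A // a ≠ a_soc}, (Rbar a_soc - Rbar a.1))
    (hδpos : 0 < δmin)
    (Rstar : A → ℝ) (a_star : A) (hstar : ∀ a, Rstar a ≤ Rstar a_star)
    (hne : a_star ≠ a_soc)
    (Δ : ℝ) (hΔdef : Δ = Rstar a_star - Rstar a_soc) (hΔpos : 0 < Δ)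
    (hSublinear :
      Tendsto (fun T : ℕ => (∑ a, (N T a : ℝ) * (Rbar a_soc - Rbar a)) / T) atTop (nhds 0)) :
    Δ ≤ atTop.liminf (fun T : ℕ => (∑ a, (N T a : ℝ) * (Rstar a_star - Rstar a)) / T) := by
  have hA : Nonempty {a : A // a ≠ a_soc} := ⟨⟨a_star, hne⟩⟩
  have hδle : ∀ a, a ≠ a_soc → δmin ≤ Rbar a_soc - Rbar a := by
    intro a ha
    rw [hδdef]
    exact ciInf_le (Set.Finite.bddBelow (Set.finite_range _)) (⟨a, ha⟩ : {a : A // a ≠ a_soc})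
  set g : ℕ → ℝ := fun T =>
    (∑ a ∈ Finset.univ.filter (· ≠ a_soc), (N T a : ℝ)) / T with hgdef
  have hg0 : ∀ T, 0 ≤ g T := fun T =>
    div_nonneg (Finset.sum_nonneg fun a _ => by positivity) (Nat.cast_nonneg T)
  -- upper bound on g
  have hgle : ∀ T : ℕ, g T ≤
      ((∑ a, (N T a : ℝ) * (Rbar a_soc - Rbar a)) / T) / δmin := by
    intro T
    rw [div_div]
    rcases Nat.eq_zero_or_pos T with h0 | hTpos
    · simp [hgdef, h0]
    have hTpos' : (0:ℝ) < T := by exact_mod_cast hTpos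
    rw [div_le_div_iff₀ hTpos' (by positivity : (0:ℝ) < ↑T * δmin)]
    have key : (∑ a ∈ Finset.univ.filter (· ≠ a_soc), (N T a : ℝ)) * δmin
        ≤ ∑ a, (N T a : ℝ) * (Rbar a_soc - Rbar a) := by
      have heq : ∑ a, (N T a : ℝ) * (Rbar a_soc - Rbar a)
          = ∑ a ∈ Finset.univ.filter (· ≠ a_soc),
              (N T a : ℝ) * (Rbar a_soc - Rbar a) := by
        symm
        apply Finset.sum_filter_of_ne
        intro a _ hne'
        intro h
        apply hne'
        simp [h, sub_self] at *
      rw [heq, Finset.sum_mul]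
      apply Finset.sum_le_sum
      intro a ha
      simp only [Finset.mem_filter] at ha
      exact mul_le_mul_of_nonneg_left (hδle a ha.2) (Nat.cast_nonneg _)
    calc (∑ a ∈ Finset.univ.filter (· ≠ a_soc), (N T a : ℝ)) * (↑T * δmin)
        = ((∑ a ∈ Finset.univ.filter (· ≠ a_soc), (N T a : ℝ)) * δmin) * T := by ring
      _ ≤ (∑ a, (N T a : ℝ) * (Rbar a_soc - Rbar a)) * T :=
          mul_le_mul_of_nonneg_right key hTpos'.le
  have hgtends : Tendsto g atTop (nhds 0) := by
    have hub : Tendsto (fun T : ℕ =>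
        ((∑ a, (N T a : ℝ) * (Rbar a_soc - Rbar a)) / T) / δmin) atTop (nhds 0) := by
      simpa using hSublinear.div_const δmin
    exact tendsto_of_tendsto_of_tendsto_of_le_of_le tendsto_const_nhds hub
      (fun T => hg0 T) (fun T => hgle T)
  -- N T a_soc / T = 1 - g T for T ≥ 1
  have hkey : ∀ᶠ T : ℕ in atTop, (N T a_soc : ℝ) / T = 1 - g T := by
    filter_upwards [eventually_ge_atTop 1] with T hT
    have hTpos : (0:ℝ) < T := by exact_mod_cast hT
    have hsplit : (N T a_soc : ℝ) + ∑ a ∈ Finset.univ.filter (· ≠ a_soc), (N T a : ℝ)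
        = T := by
      have := hN T
      have h2 : ∑ a, (N T a : ℝ) = T := by exact_mod_cast congrArg (Nat.cast (R := ℝ)) this
      rw [Finset.filter_ne']
      rw [Finset.add_sum_erase Finset.univ (fun a => ((N T a : ℕ) : ℝ)) (Finset.mem_univ a_soc)]
      exact h2
    have : (N T a_soc : ℝ) = T - ∑ a ∈ Finset.univ.filter (· ≠ a_soc), (N T a : ℝ) := by
      linarith
    show (N T a_soc : ℝ) / T = 1 - (∑ a ∈ Finset.univ.filter (· ≠ a_soc), (N T a : ℝ)) / T
    rw [this]
    field_simp
  have hfrac : Tendsto (fun T : ℕ => (N T a_soc : ℝ) / T) atTop (nhds 1) := by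
    have : Tendsto (fun T : ℕ => 1 - g T) atTop (nhds 1) := by
      simpa using (tendsto_const_nhds (x := (1:ℝ)) (f := atTop)).sub hgtends
    exact Tendsto.congr' (hkey.mono fun T h => h.symm) this
  -- lower bound pointwise
  have hlb : ∀ T : ℕ, Δ * ((N T a_soc : ℝ) / T)
      ≤ (∑ a, (N T a : ℝ) * (Rstar a_star - Rstar a)) / T := by
    intro T
    rcases Nat.eq_zero_or_pos T with h0 | hTpos
    · simp [h0]
    have hTpos' : (0:ℝ) < T := by exact_mod_cast hTpos
    rw [mul_div_assoc']
    apply div_le_div_of_nonneg_right ?_ hTpos'.le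
    calc Δ * (N T a_soc : ℝ) = (N T a_soc : ℝ) * (Rstar a_star - Rstar a_soc) := by
          rw [hΔdef]; ring
      _ ≤ ∑ a, (N T a : ℝ) * (Rstar a_star - Rstar a) := by
          apply Finset.single_le_sum (f := fun a => (N T a : ℝ) * (Rstar a_star - Rstar a))
          · intro a _
            exact mul_nonneg (Nat.cast_nonneg _) (sub_nonneg.2 (hstar a))
          · exact Finset.mem_univ a_soc
  -- conclude
  have h1 : Tendsto (fun T : ℕ => Δ * ((N T a_soc : ℝ) / T)) atTop (nhds Δ) := by
    simpa using hfrac.const_mul Δ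
  have h2 : Δ = atTop.liminf (fun T : ℕ => Δ * ((N T a_soc : ℝ) / T)) := h1.liminf_eq.symm
  rw [h2]
  set C : ℝ := Rstar a_star - Finset.univ.inf' Finset.univ_nonempty Rstar with hC
  have hgapC : ∀ a : A, Rstar a_star - Rstar a ≤ C := by
    intro a
    have : Finset.univ.inf' Finset.univ_nonempty Rstar ≤ Rstar a :=
      Finset.inf'_le _ (Finset.mem_univ a)
    simp only [hC]
    linarith
  have hC0 : 0 ≤ C := by
    have := hgapC a_star
    linarith
  have hvle : ∀ T : ℕ, (∑ a, (N T a : ℝ) * (Rstar a_star - Rstar a)) / T ≤ C := by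
    intro T
    rcases Nat.eq_zero_or_pos T with h0 | hTpos
    · simp [h0, hC0]
    have hTpos' : (0:ℝ) < T := by exact_mod_cast hTpos
    rw [div_le_iff₀ hTpos']
    calc ∑ a, (N T a : ℝ) * (Rstar a_star - Rstar a)
        ≤ ∑ a, (N T a : ℝ) * C :=
          Finset.sum_le_sum fun a _ =>
            mul_le_mul_of_nonneg_left (hgapC a) (Nat.cast_nonneg _)
      _ = C * T := by
          rw [← Finset.sum_mul]
          have h2 : ∑ a, (N T a : ℝ) = T := by exact_mod_cast congrArg (Nat.cast (R := ℝ)) (hN T)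
          rw [h2]; ring
  exact Filter.liminf_le_liminf (Eventually.of_forall hlb) h1.isBoundedUnder_ge
    (isCoboundedUnder_ge_of_le atTop hvle)
end

section
/- One-step trust-ratio contraction: fix a time t and γ > 0, and suppose that at step t every biased evaluator's loss exceeds every truthful evaluator's loss by at least γ, i.e. l(t, m) ≥ l(t, m') + γ for all m ∈ B and m' ∈ G. Then the ratio of biased to truthful aggregate weight contracts by a factor e^{−ηγ}: (∑_{m∈B} w(t+1, m)) / (∑_{m'∈G} w(t+1, m')) ≤ e^{−ηγ} · (∑_{m∈B} w(t, m)) / (∑_{m'∈G} w(t, m')). -/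
/-- Multiplicative-weights trust weights: `w 0 m = 1/|M|` and
`w (t+1) m = w t m · exp(−η · l t m)`. -/
noncomputable def mwuWeight {M : Type*} [Fintype M] (η : ℝ) (l : ℕ → M → ℝ) :
    ℕ → M → ℝ
  | 0 => fun _ => 1 / (Fintype.card M : ℝ)
  | t + 1 => fun m => mwuWeight η l t m * Real.exp (-η * l t m)

/-- **One-step trust-ratio contraction.** If at step `t` every biased evaluator's loss
exceeds every truthful evaluator's loss by at least `γ`, then the ratio of biased to
truthful aggregate weight contracts by a factor `e^{−ηγ}`. -/
theorem mwu_one_step_contraction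
    {M : Type*} [Fintype M] [DecidableEq M] [Nonempty M]
    (B G : Finset M) (hB : B.Nonempty) (hG : G.Nonempty)
    (hdisj : Disjoint B G) (hunion : B ∪ G = Finset.univ)
    (η : ℝ) (hη : 0 < η) (l : ℕ → M → ℝ)
    (t : ℕ) (γ : ℝ) (hγ : 0 < γ)
    (hdom : ∀ m ∈ B, ∀ m' ∈ G, l t m' + γ ≤ l t m) :
    (∑ m ∈ B, mwuWeight η l (t + 1) m) / (∑ m' ∈ G, mwuWeight η l (t + 1) m') ≤
      Real.exp (-(η * γ)) *
        ((∑ m ∈ B, mwuWeight η l t m) / (∑ m' ∈ G, mwuWeight η l t m')) := by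
  have hpos : ∀ s m, 0 < mwuWeight η l s m := by
    intro s
    induction s with
    | zero =>
        intro m
        simp only [mwuWeight]
        positivity
    | succ n ih =>
        intro m
        simp only [mwuWeight]
        exact mul_pos (ih m) (Real.exp_pos _)
  set L := G.sup' hG (l t) with hL
  have hLmem : ∃ m' ∈ G, l t m' = L := by
    obtain ⟨m', hm', hval⟩ := G.exists_mem_eq_sup' hG (l t)
    exact ⟨m', hm', hval.symm⟩
  have hBS : 0 < ∑ m ∈ B, mwuWeight η l t m :=
    Finset.sum_pos (fun m _ => hpos t m) hB
  have hGS : 0 < ∑ m' ∈ G, mwuWeight η l t m' :=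
    Finset.sum_pos (fun m _ => hpos t m) hG
  have hA1 : (∑ m ∈ B, mwuWeight η l (t + 1) m) ≤
      Real.exp (-η * (L + γ)) * ∑ m ∈ B, mwuWeight η l t m := by
    rw [Finset.mul_sum]
    apply Finset.sum_le_sum
    intro m hm
    simp only [mwuWeight]
    rw [mul_comm (Real.exp (-η * (L + γ)))]
    apply mul_le_mul_of_nonneg_left _ (hpos t m).le
    apply Real.exp_le_exp.2
    obtain ⟨m', hm', hval⟩ := hLmem
    have := hdom m hm m' hm'
    nlinarith [hη.le]
  have hA2 : Real.exp (-η * L) * (∑ m' ∈ G, mwuWeight η l t m') ≤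
      ∑ m' ∈ G, mwuWeight η l (t + 1) m' := by
    rw [Finset.mul_sum]
    apply Finset.sum_le_sum
    intro m hm
    simp only [mwuWeight]
    rw [mul_comm (Real.exp (-η * L))]
    apply mul_le_mul_of_nonneg_left _ (hpos t m).le
    apply Real.exp_le_exp.2
    have : l t m ≤ L := Finset.le_sup' (l t) hm
    nlinarith [hη.le]
  have hd : 0 < Real.exp (-η * L) * (∑ m' ∈ G, mwuWeight η l t m') :=
    mul_pos (Real.exp_pos _) hGS
  have key := div_le_div₀ (by positivity) hA1 hd hA2
  refine key.trans_eq ?_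
  rw [mul_div_mul_comm, ← Real.exp_sub]
  congr 2
  ring
end

section
/- Exponential Trust Concentration: fix t ∈ ℕ and γ > 0, and suppose that at every step s < t every biased evaluator's loss exceeds every truthful evaluator's loss by at least γ, i.e. l(s, m) ≥ l(s, m') + γ for all m ∈ B, m' ∈ G, and s < t. Then the normalized aggregate weight of the biased evaluators satisfies W_bias(t) := (∑_{m∈B} w(t, m)) / (∑_{m∈M} w(t, m)) ≤ (|B| / |G|) · exp(−η γ t). -/
lemma mwuWeight_eq {M : Type*} [Fintype M] (η : ℝ) (l : ℕ → M → ℝ) (t : ℕ) (m : M) :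
    mwuWeight η l t m = (1 / (Fintype.card M : ℝ)) *
      Real.exp (-η * ∑ s ∈ Finset.range t, l s m) := by
  induction t with
  | zero => simp [mwuWeight]
  | succ t ih =>
      simp only [mwuWeight, ih, Finset.sum_range_succ, mul_add, Real.exp_add]
      ring

lemma mwuWeight_pos {M : Type*} [Fintype M] [Nonempty M] (η : ℝ) (l : ℕ → M → ℝ)
    (t : ℕ) (m : M) : 0 < mwuWeight η l t m := by
  rw [mwuWeight_eq]
  have : (0 : ℝ) < (Fintype.card M : ℝ) := by
    exact_mod_cast Fintype.card_pos
  positivity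

/-- **Exponential Trust Concentration.** If at every step `s < t` every biased evaluator's
loss exceeds every truthful evaluator's loss by at least `γ`, then the normalized aggregate
weight of the biased evaluators satisfies
`W_bias(t) ≤ (|B|/|G|) · exp(−ηγt)`. -/
theorem mwu_exponential_trust_concentration
    {M : Type*} [Fintype M] [DecidableEq M] [Nonempty M]
    (B G : Finset M) (hB : B.Nonempty) (hG : G.Nonempty)
    (hdisj : Disjoint B G) (hunion : B ∪ G = Finset.univ)
    (η : ℝ) (hη : 0 < η) (l : ℕ → M → ℝ)
    (t : ℕ) (γ : ℝ) (hγ : 0 < γ)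
    (hdom : ∀ s < t, ∀ m ∈ B, ∀ m' ∈ G, l s m' + γ ≤ l s m) :
    (∑ m ∈ B, mwuWeight η l t m) / (∑ m, mwuWeight η l t m) ≤
      ((B.card : ℝ) / (G.card : ℝ)) * Real.exp (-(η * γ * t)) := by
  set w := mwuWeight η l t with hw
  have hpos : ∀ m : M, 0 < w m := fun m => mwuWeight_pos η l t m
  have hSB : 0 ≤ ∑ m ∈ B, w m := Finset.sum_nonneg fun m _ => (hpos m).le
  have hSG : 0 < ∑ m ∈ G, w m :=
    Finset.sum_pos (fun m _ => hpos m) hG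
  have hSM : 0 < ∑ m, w m :=
    Finset.sum_pos (fun m _ => hpos m) Finset.univ_nonempty
  -- pairwise inequality
  have hpair : ∀ m ∈ B, ∀ m' ∈ G, w m ≤ Real.exp (-(η * γ * t)) * w m' := by
    intro m hm m' hm'
    have hsum : (∑ s ∈ Finset.range t, l s m') + γ * t ≤ ∑ s ∈ Finset.range t, l s m := by
      have h1 : ∀ s ∈ Finset.range t, l s m' + γ ≤ l s m := by
        intro s hs
        exact hdom s (Finset.mem_range.mp hs) m hm m' hm'
      have := Finset.sum_le_sum h1
      simpa [Finset.sum_add_distrib, mul_comm] using this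
    rw [hw, mwuWeight_eq, mwuWeight_eq, mul_comm (Real.exp _), mul_assoc,
      ← Real.exp_add]
    have hc : (0 : ℝ) < (Fintype.card M : ℝ) := by exact_mod_cast Fintype.card_pos
    have hexp : Real.exp (-η * ∑ s ∈ Finset.range t, l s m) ≤
        Real.exp (-η * ∑ s ∈ Finset.range t, l s m' + -(η * γ * t)) := by
      apply Real.exp_le_exp.mpr
      nlinarith [hsum, hη.le]
    have h1c : (0:ℝ) ≤ 1 / (Fintype.card M : ℝ) := by positivity
    calc 1 / (Fintype.card M : ℝ) * Real.exp (-η * ∑ s ∈ Finset.range t, l s m)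
        ≤ 1 / (Fintype.card M : ℝ) *
          Real.exp (-η * ∑ s ∈ Finset.range t, l s m' + -(η * γ * t)) :=
          mul_le_mul_of_nonneg_left hexp h1c
      _ = 1 / (Fintype.card M : ℝ) *
          Real.exp (-η * ∑ s ∈ Finset.range t, l s m' + -(η * γ * ↑t)) := rfl
  -- main inequality on sums
  have hkey : (∑ m ∈ B, w m) * (G.card : ℝ) ≤
      (B.card : ℝ) * Real.exp (-(η * γ * t)) * ∑ m' ∈ G, w m' := by
    have : ∑ m ∈ B, ∑ m' ∈ G, w m ≤
        ∑ m ∈ B, ∑ m' ∈ G, Real.exp (-(η * γ * t)) * w m' := by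
      apply Finset.sum_le_sum
      intro m hm
      apply Finset.sum_le_sum
      intro m' hm'
      exact hpair m hm m' hm'
    have hL : ∑ m ∈ B, ∑ _m' ∈ G, w m = (∑ m ∈ B, w m) * (G.card : ℝ) := by
      simp [Finset.sum_const, nsmul_eq_mul, ← Finset.sum_mul, mul_comm]
    have hR : ∑ _m ∈ B, ∑ m' ∈ G, Real.exp (-(η * γ * t)) * w m' =
        (B.card : ℝ) * Real.exp (-(η * γ * t)) * ∑ m' ∈ G, w m' := by
      rw [← Finset.mul_sum, Finset.sum_const, nsmul_eq_mul]; ring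
    rw [hL, hR] at this
    exact this
  have hGc : (0 : ℝ) < (G.card : ℝ) := by exact_mod_cast Finset.card_pos.mpr hG
  have step1 : (∑ m ∈ B, w m) / (∑ m, w m) ≤ (∑ m ∈ B, w m) / (∑ m ∈ G, w m) := by
    apply div_le_div_of_nonneg_left hSB hSG
    rw [← hunion]
    have := Finset.sum_le_sum_of_subset_of_nonneg
      (Finset.subset_union_right (s₁ := B) (s₂ := G))
      (fun m _ _ => (hpos m).le)
    simpa using this
  have step2 : (∑ m ∈ B, w m) / (∑ m ∈ G, w m) ≤
      ((B.card : ℝ) / (G.card : ℝ)) * Real.exp (-(η * γ * t)) := by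
    rw [div_mul_eq_mul_div, div_le_div_iff₀ hSG hGc]
    linarith [hkey]
  calc (∑ m ∈ B, w m) / (∑ m, w m) ≤ (∑ m ∈ B, w m) / (∑ m ∈ G, w m) := step1
    _ ≤ _ := step2
end

section
/- Suppression time bound: fix γ > 0 and ε > 0, and suppose that at every step s every biased evaluator's loss exceeds every truthful evaluator's loss by at least γ, i.e. l(s, m) ≥ l(s, m') + γ for all m ∈ B, m' ∈ G, and all s ∈ ℕ. Then for every t ∈ ℕ with t ≥ (1/(η γ)) · log(|B| / (|G| · ε)), the normalized aggregate biased weight satisfies (∑_{m∈B} w(t, m)) / (∑_{m∈M} w(t, m)) ≤ ε. -/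
lemma mwuWeight_closed {M : Type*} [Fintype M] (η : ℝ) (l : ℕ → M → ℝ) (t : ℕ) (m : M) :
    mwuWeight η l t m = 1 / (Fintype.card M : ℝ) *
      Real.exp (-η * ∑ s ∈ Finset.range t, l s m) := by
  induction t with
  | zero => simp [mwuWeight]
  | succ n ih =>
    show mwuWeight η l n m * Real.exp (-η * l n m) = _
    rw [ih, Finset.sum_range_succ, mul_assoc, ← Real.exp_add]
    ring_nf

/-- **Suppression time bound.** Under a persistent per-step loss gap `γ`, for every
`t ≥ (1/(ηγ)) · log(|B|/(|G|·ε))` the normalized aggregate biased weight is at most `ε`. -/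
theorem mwu_suppression_time_bound
    {M : Type*} [Fintype M] [DecidableEq M] [Nonempty M]
    (B G : Finset M) (hB : B.Nonempty) (hG : G.Nonempty)
    (hdisj : Disjoint B G) (hunion : B ∪ G = Finset.univ)
    (η : ℝ) (hη : 0 < η) (l : ℕ → M → ℝ)
    (γ : ℝ) (hγ : 0 < γ) (ε : ℝ) (hε : 0 < ε)
    (hdom : ∀ s : ℕ, ∀ m ∈ B, ∀ m' ∈ G, l s m' + γ ≤ l s m)
    (t : ℕ)
    (ht : (1 / (η * γ)) * Real.log ((B.card : ℝ) / ((G.card : ℝ) * ε)) ≤ (t : ℝ)) :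
    (∑ m ∈ B, mwuWeight η l t m) / (∑ m, mwuWeight η l t m) ≤ ε := by
  set w := mwuWeight η l with hw
  have hBpos : (0:ℝ) < B.card := by exact_mod_cast hB.card_pos
  have hGpos : (0:ℝ) < G.card := by exact_mod_cast hG.card_pos
  set c : ℝ := Real.exp (-(η * γ * t)) with hc
  -- pointwise comparison
  have hpt : ∀ m ∈ B, ∀ m' ∈ G, w t m ≤ c * w t m' := by
    intro m hm m' hm'
    rw [hw, mwuWeight_closed, mwuWeight_closed, hc, mul_left_comm, ← Real.exp_add]
    have hcard : (0:ℝ) < Fintype.card M := by positivity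
    apply mul_le_mul_of_nonneg_left _ (by positivity)
    apply Real.exp_le_exp.2
    have hsum : (∑ s ∈ Finset.range t, l s m') + t * γ ≤ ∑ s ∈ Finset.range t, l s m := by
      have : ∑ s ∈ Finset.range t, (l s m' + γ) ≤ ∑ s ∈ Finset.range t, l s m :=
        Finset.sum_le_sum fun s _ => hdom s m hm m' hm'
      simpa [Finset.sum_add_distrib, mul_comm] using this
    nlinarith [hη.le]
  have hcpos : 0 < c := Real.exp_pos _
  -- sums
  set SB := ∑ m ∈ B, w t m with hSB
  set SG := ∑ m ∈ G, w t m with hSG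
  have hSGpos : 0 < SG := Finset.sum_pos (fun m _ => mwuWeight_pos η l t m) hG
  have hSBpos : 0 < SB := Finset.sum_pos (fun m _ => mwuWeight_pos η l t m) hB
  -- SB ≤ |B| * c * SG / |G|
  have hstep : ∀ m ∈ B, w t m ≤ c * SG / G.card := by
    intro m hm
    rw [le_div_iff₀ hGpos]
    calc w t m * G.card = ∑ _m' ∈ G, w t m := by
          rw [Finset.sum_const, nsmul_eq_mul, mul_comm]
      _ ≤ ∑ m' ∈ G, c * w t m' := Finset.sum_le_sum fun m' hm' => hpt m hm m' hm'
      _ = c * SG := by rw [← Finset.mul_sum]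
  have hSBle : SB ≤ B.card * (c * SG / G.card) := by
    calc SB ≤ ∑ _m ∈ B, c * SG / G.card := Finset.sum_le_sum hstep
      _ = B.card * (c * SG / G.card) := by rw [Finset.sum_const, nsmul_eq_mul]
  -- bound c
  have hX : (0:ℝ) < (B.card : ℝ) / ((G.card : ℝ) * ε) := by positivity
  have hle : Real.log ((B.card : ℝ) / ((G.card : ℝ) * ε)) ≤ η * γ * t := by
    have h := mul_le_mul_of_nonneg_left ht (le_of_lt (by positivity : (0:ℝ) < η * γ))
    have hne : (η * γ) ≠ 0 := by positivity
    field_simp at h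
    linarith [h]
  have hcle : c ≤ (G.card : ℝ) * ε / B.card := by
    rw [hc]
    have := Real.exp_le_exp.2 hle
    rw [Real.exp_log hX] at *
    rw [Real.exp_neg]
    calc (Real.exp (η * γ * t))⁻¹ ≤ ((B.card : ℝ) / ((G.card : ℝ) * ε))⁻¹ := by
          apply inv_anti₀ hX this
      _ = (G.card : ℝ) * ε / B.card := by rw [inv_div]
  -- combine: SB ≤ ε * SG
  have hmain : SB ≤ ε * SG := by
    calc SB ≤ B.card * (c * SG / G.card) := hSBle
      _ ≤ B.card * (((G.card : ℝ) * ε / B.card) * SG / G.card) := by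
          gcongr
      _ = ε * SG := by field_simp
  -- total sum
  have htot : (∑ m, w t m) = SB + SG := by
    rw [hSB, hSG, ← Finset.sum_union hdisj, hunion]
  rw [htot, div_le_iff₀ (by linarith)]
  nlinarith [hSBpos, hSGpos, hε]
end

section
/- Combined decoupling bound with explicit constants: suppose the observed regret satisfies R_T^obs ≤ C·√(T·log T) with C ≥ 0 and T ≥ 1. Then the number of pulls of the sycophantic action satisfies (N(a_soc) : ℝ) ≥ T − (C/δ_min)·√(T·log T), and consequently the latent regret satisfies R_T^lat ≥ (T − (C/δ_min)·√(T·log T))·Δ. -/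
/-- **Combined decoupling bound with explicit constants.**
If the observed regret satisfies `R_T^obs ≤ C·√(T·log T)` with `C ≥ 0` and `T ≥ 1`, then
`(N a_soc : ℝ) ≥ T − (C/δ_min)·√(T·log T)` and consequently
`R_T^lat ≥ (T − (C/δ_min)·√(T·log T))·Δ`. -/
theorem combined_decoupling_bound
    {A : Type*} [Fintype A] [DecidableEq A] [Nonempty A]
    (hcard : 1 < Fintype.card A)
    (T : ℕ) (hT : 1 ≤ T)
    (N : A → ℕ) (hN : ∑ a, N a = T)
    (Rbar : A → ℝ) (a_soc : A) (hsoc : ∀ a, Rbar a ≤ Rbar a_soc)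
    (δmin : ℝ) (hδdef : δmin = ⨅ a : {a : A // a ≠ a_soc}, (Rbar a_soc - Rbar a.1))
    (hδpos : 0 < δmin)
    (Rstar : A → ℝ) (a_star : A) (hstar : ∀ a, Rstar a ≤ Rstar a_star)
    (hne : a_star ≠ a_soc)
    (Δ : ℝ) (hΔdef : Δ = Rstar a_star - Rstar a_soc) (hΔpos : 0 < Δ)
    (C : ℝ) (hC : 0 ≤ C)
    (Robs : ℝ) (hRobs : Robs = ∑ a, (N a : ℝ) * (Rbar a_soc - Rbar a))
    (Rlat : ℝ) (hRlat : Rlat = ∑ a, (N a : ℝ) * (Rstar a_star - Rstar a))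
    (hObsBound : Robs ≤ C * Real.sqrt (T * Real.log T)) :
    (N a_soc : ℝ) ≥ T - (C / δmin) * Real.sqrt (T * Real.log T) ∧
      Rlat ≥ (T - (C / δmin) * Real.sqrt (T * Real.log T)) * Δ := by
  have hsub : ∀ a : A, a ≠ a_soc → δmin ≤ Rbar a_soc - Rbar a := by
    intro a ha
    rw [hδdef]
    exact ciInf_le (Set.Finite.bddBelow (Set.finite_range
      (fun a : {a : A // a ≠ a_soc} => Rbar a_soc - Rbar a.1))) ⟨a, ha⟩
  have hNcast : (∑ a, (N a : ℝ)) = T := by exact_mod_cast congrArg (Nat.cast : ℕ → ℝ) hN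
  have hsplit : (∑ a ∈ Finset.univ.erase a_soc, (N a : ℝ)) + N a_soc = T := by
    rw [Finset.sum_erase_add _ _ (Finset.mem_univ a_soc)]; exact hNcast
  have hRobs' : Robs = ∑ a ∈ Finset.univ.erase a_soc, (N a : ℝ) * (Rbar a_soc - Rbar a) := by
    have e1 := Finset.sum_erase_add Finset.univ
      (fun a => (N a : ℝ) * (Rbar a_soc - Rbar a)) (Finset.mem_univ a_soc)
    rw [hRobs, ← e1]; simp
  have hlow : δmin * ((T : ℝ) - N a_soc) ≤ Robs := by
    rw [hRobs']
    have : (T : ℝ) - N a_soc = ∑ a ∈ Finset.univ.erase a_soc, (N a : ℝ) := by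
      linarith
    rw [this, Finset.mul_sum]
    apply Finset.sum_le_sum
    intro a ha
    have hane := Finset.ne_of_mem_erase ha
    have h1 := hsub a hane
    have h2 : (0 : ℝ) ≤ N a := Nat.cast_nonneg _
    nlinarith
  have hkey : (T : ℝ) - N a_soc ≤ (C / δmin) * Real.sqrt (T * Real.log T) := by
    rw [div_mul_eq_mul_div, le_div_iff₀ hδpos]
    nlinarith
  have h1 : (N a_soc : ℝ) ≥ T - (C / δmin) * Real.sqrt (T * Real.log T) := by linarith
  refine ⟨h1, ?_⟩
  have hlat : (N a_soc : ℝ) * Δ ≤ Rlat := by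
    have e2 := Finset.sum_erase_add Finset.univ
      (fun a => (N a : ℝ) * (Rstar a_star - Rstar a)) (Finset.mem_univ a_soc)
    rw [hRlat, ← e2]; rw [← hΔdef]
    have : (0:ℝ) ≤ ∑ a ∈ Finset.univ.erase a_soc, (N a : ℝ) * (Rstar a_star - Rstar a) := by
      apply Finset.sum_nonneg
      intro a _
      have := hstar a
      have h2 : (0 : ℝ) ≤ N a := Nat.cast_nonneg _
      nlinarith
    linarith
  calc Rlat ≥ (N a_soc : ℝ) * Δ := hlat
    _ ≥ (T - (C / δmin) * Real.sqrt (T * Real.log T)) * Δ :=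
        mul_le_mul_of_nonneg_right h1 hΔpos.le
end
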